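/- A symmetric polynomial matrix F ∈ 𝕊^p[x] is an SOS matrix if and only if the scalar polynomial yᵀF(x)y in variables (x,y) ∈ ℝ^{n+p} is a sum of squares of polynomials. -/
import Mathlib


open Matrix MvPolynomial

private lemma sos_zero' {σ : Type*} {t : ℕ} (q : Fin t → MvPolynomial σ ℝ)
    (h : ∑ k, (q k) ^ 2 = 0) : ∀ k, q k = 0 := by
  intro k
  apply MvPolynomial.funext
  intro x
  have h' : ∑ k, (eval x (q k)) ^ 2 = 0 := by
    have := congrArg (eval x) h
    simpa [map_sum] using this
  have := (Finset.sum_eq_zero_iff_of_nonneg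
    (fun i _ => sq_nonneg (eval x (q i)))).mp h' k (Finset.mem_univ k)
  simpa [pow_eq_zero_iff] using this

private lemma gram_of_sos {n p : ℕ} (F : Matrix (Fin p) (Fin p) (MvPolynomial (Fin n) ℝ))
    (hsym : F.IsSymm) (t : ℕ)
    (h : Fin t → MvPolynomial (Fin p) (MvPolynomial (Fin n) ℝ))
    (hEq : ∑ i : Fin p, ∑ j : Fin p,
        (X i * X j * C (F i j) : MvPolynomial (Fin p) (MvPolynomial (Fin n) ℝ)) = ∑ k, (h k) ^ 2)
    (h0 : ∀ k, aeval (fun _ : Fin p => (0 : MvPolynomial (Fin n) ℝ)) (h k) = 0)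
    (i j : Fin p) :
    F i j = ∑ k, (aeval (fun _ : Fin p => (0 : MvPolynomial (Fin n) ℝ)) (pderiv i (h k))) *
      (aeval (fun _ : Fin p => (0 : MvPolynomial (Fin n) ℝ)) (pderiv j (h k))) := by
  classical
  have key := congrArg (fun q => aeval (fun _ : Fin p => (0 : MvPolynomial (Fin n) ℝ))
    (pderiv i (pderiv j q))) hEq
  simp only [map_sum] at key
  have hLHS : ∀ a b : Fin p,
      aeval (fun _ : Fin p => (0 : MvPolynomial (Fin n) ℝ))
          (pderiv i (pderiv j (X a * X b * C (F a b)))) =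
      (if b = j then if a = i then F a b else 0 else 0) +
        (if b = i then if a = j then F a b else 0 else 0) := by
    intro a b
    clear hEq key h0 h hsym
    simp only [pderiv_mul, pderiv_C, pderiv_X, Pi.single_apply, mul_zero, zero_mul, add_zero,
      zero_add, mul_ite, ite_mul, mul_one, one_mul, apply_ite (pderiv i),
      apply_ite (aeval (fun _ : Fin p => (0 : MvPolynomial (Fin n) ℝ))), map_zero, map_add,
      _root_.map_mul, _root_.map_one, aeval_X, aeval_C, Algebra.algebraMap_self_apply]
    split_ifs <;> ring
  have hRHS : ∀ k, aeval (fun _ : Fin p => (0 : MvPolynomial (Fin n) ℝ))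
        (pderiv i (pderiv j ((h k) ^ 2))) =
      2 * ((aeval (fun _ : Fin p => (0 : MvPolynomial (Fin n) ℝ)) (pderiv i (h k))) *
        (aeval (fun _ : Fin p => (0 : MvPolynomial (Fin n) ℝ)) (pderiv j (h k)))) := by
    intro k
    rw [sq, pderiv_mul, map_add, pderiv_mul, pderiv_mul]
    simp only [map_add, _root_.map_mul, h0]
    ring
  simp only [hLHS, hRHS] at key
  simp only [Finset.sum_add_distrib, Finset.sum_ite_eq', Finset.mem_univ, if_true] at key
  have h2 : (2 : MvPolynomial (Fin n) ℝ) * F i j =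
      2 * ∑ k, (aeval (fun _ : Fin p => (0 : MvPolynomial (Fin n) ℝ)) (pderiv i (h k))) *
        (aeval (fun _ : Fin p => (0 : MvPolynomial (Fin n) ℝ)) (pderiv j (h k))) := by
    rw [Finset.mul_sum]
    rw [two_mul]
    nth_rewrite 2 [← hsym.apply i j]
    convert key using 2
  exact mul_left_cancel₀ two_ne_zero h2

/-- A symmetric polynomial matrix F ∈ 𝕊^p[x] is an SOS matrix iff the scalar polynomial
yᵀF(x)y in the variables (x,y) ∈ ℝ^{n+p} is a sum of squares of polynomials. -/
theorem stmt_4 {n p : ℕ} (F : Matrix (Fin p) (Fin p) (MvPolynomial (Fin n) ℝ))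
    (hsym : F.IsSymm) :
    (∃ (s : ℕ) (R : Matrix (Fin s) (Fin p) (MvPolynomial (Fin n) ℝ)), F = Rᵀ * R) ↔
      ∃ (t : ℕ) (g : Fin t → MvPolynomial (Fin n ⊕ Fin p) ℝ),
        (∑ i : Fin p, ∑ j : Fin p,
            X (Sum.inr i) * X (Sum.inr j) * MvPolynomial.rename Sum.inl (F i j)) =
          ∑ k, (g k) ^ 2 := by
  classical
  constructor
  · rintro ⟨s, R, rfl⟩
    refine ⟨s, fun k => ∑ i, X (Sum.inr i) * rename Sum.inl (R k i), ?_⟩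
    have hentry : ∀ i j, ((Rᵀ * R) i j) = ∑ k, R k i * R k j := by
      intro i j; simp [Matrix.mul_apply, Matrix.transpose_apply]
    calc ∑ i, ∑ j, X (Sum.inr i) * X (Sum.inr j) * rename Sum.inl ((Rᵀ * R) i j)
        = ∑ i, ∑ j, ∑ k, (X (Sum.inr i) * rename Sum.inl (R k i)) *
            (X (Sum.inr j) * rename Sum.inl (R k j)) := by
          refine Finset.sum_congr rfl fun i _ => Finset.sum_congr rfl fun j _ => ?_
          rw [hentry, map_sum, Finset.mul_sum]
          refine Finset.sum_congr rfl fun k _ => ?_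
          rw [_root_.map_mul]; ring
      _ = ∑ k, ∑ i, ∑ j, (X (Sum.inr i) * rename Sum.inl (R k i)) *
            (X (Sum.inr j) * rename Sum.inl (R k j)) := by
          rw [show (∑ i : Fin p, ∑ j : Fin p, ∑ k : Fin s,
              (X (Sum.inr i) * rename Sum.inl (R k i)) *
                (X (Sum.inr j) * rename Sum.inl (R k j)))
              = ∑ i : Fin p, ∑ k : Fin s, ∑ j : Fin p,
              (X (Sum.inr i) * rename Sum.inl (R k i)) *
                (X (Sum.inr j) * rename Sum.inl (R k j))
            from Finset.sum_congr rfl fun i _ => Finset.sum_comm]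
          exact Finset.sum_comm
      _ = ∑ k, (∑ i, X (Sum.inr i) * rename Sum.inl (R k i)) ^ 2 := by
          refine Finset.sum_congr rfl fun k _ => ?_
          rw [sq, Finset.sum_mul_sum]
  · rintro ⟨t, g, hg⟩
    have hφC : ∀ q : MvPolynomial (Fin n) ℝ,
        (aeval (Sum.elim (fun l => (C (X l) : MvPolynomial (Fin p) (MvPolynomial (Fin n) ℝ))) X) (rename Sum.inl q) :
          MvPolynomial (Fin p) (MvPolynomial (Fin n) ℝ)) = C q := by
      intro q
      rw [aeval_rename]
      have h1 : ((Sum.elim (fun l => (C (X l) :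
          MvPolynomial (Fin p) (MvPolynomial (Fin n) ℝ))) X) ∘ Sum.inl)
          = fun l => C (X l) := rfl
      rw [h1]
      have h2 : (aeval (fun l => (C (X l) :
            MvPolynomial (Fin p) (MvPolynomial (Fin n) ℝ))) :
            MvPolynomial (Fin n) ℝ →ₐ[ℝ] MvPolynomial (Fin p) (MvPolynomial (Fin n) ℝ))
          = (IsScalarTower.toAlgHom ℝ (MvPolynomial (Fin n) ℝ)
              (MvPolynomial (Fin p) (MvPolynomial (Fin n) ℝ))) := by
        apply MvPolynomial.algHom_ext; intro l
        simp [IsScalarTower.toAlgHom_apply, MvPolynomial.algebraMap_eq]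
      rw [h2]
      simp [IsScalarTower.toAlgHom_apply, MvPolynomial.algebraMap_eq]
    set h : Fin t → MvPolynomial (Fin p) (MvPolynomial (Fin n) ℝ) :=
      fun k => aeval (Sum.elim (fun l => (C (X l) : MvPolynomial (Fin p) (MvPolynomial (Fin n) ℝ))) X) (g k) with hh
    have hEq : ∑ i : Fin p, ∑ j : Fin p,
        (X i * X j * C (F i j) : MvPolynomial (Fin p) (MvPolynomial (Fin n) ℝ)) =
        ∑ k, (h k) ^ 2 := by
      have := congrArg (aeval (Sum.elim (fun l => (C (X l) : MvPolynomial (Fin p) (MvPolynomial (Fin n) ℝ))) X)) hg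
      simp only [map_sum, _root_.map_mul, map_pow] at this
      simp only [hφC] at this
      simpa [hh, aeval_X] using this
    have h0 : ∀ k, aeval (fun _ : Fin p => (0 : MvPolynomial (Fin n) ℝ)) (h k) = 0 := by
      apply sos_zero'
      have := congrArg (aeval (fun _ : Fin p => (0 : MvPolynomial (Fin n) ℝ))) hEq
      simp only [map_sum, _root_.map_mul, map_pow, aeval_X] at this
      simpa using this.symm
    refine ⟨t, Matrix.of (fun k i =>
      aeval (fun _ : Fin p => (0 : MvPolynomial (Fin n) ℝ)) (pderiv i (h k))), ?_⟩
    ext i j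
    rw [Matrix.mul_apply, gram_of_sos F hsym t h hEq h0 i j]
    simp [Matrix.transpose_apply]
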